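/- Let n be a friend of 10. Then n has at least five distinct prime factors, i.e. ω(n) ≥ 5. -/

import Mathlib

open ArithmeticFunction
open scoped ArithmeticFunction.sigma

/-- The abundancy index `σ(n)/n` as a rational number. -/
noncomputable def abundancy (n : ℕ) : ℚ := (σ 1 n : ℚ) / n

/-- `m` is a friend of `n` if they are distinct positive integers with the same
abundancy index. -/
def IsFriend (m n : ℕ) : Prop := 0 < m ∧ 0 < n ∧ m ≠ n ∧ abundancy m = abundancy n

open Finset

/-- Geometric series identity for sigma of a prime power. -/
lemma geom_id {p : ℕ} (hp : p.Prime) (e : ℕ) : (p - 1) * σ 1 (p ^ e) = p ^ (e + 1) - 1 := by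
  have h1 : 1 ≤ p ^ (e + 1) := Nat.one_le_pow _ _ hp.pos
  have hp1 := hp.one_lt
  have hz : ((p : ℤ) - 1) * σ 1 (p ^ e) = (p : ℤ) ^ (e + 1) - 1 := by
    rw [sigma_one_apply_prime_pow hp]
    push_cast
    rw [mul_comm, geom_sum_mul]
  have key : (((p - 1) * σ 1 (p ^ e) : ℕ) : ℤ) = ((p ^ (e + 1) - 1 : ℕ) : ℤ) := by
    rw [Nat.cast_mul, Nat.cast_sub hp1.le, Nat.cast_sub h1]
    push_cast
    linarith
  exact_mod_cast key

/-- Monotonicity of the abundancy of prime powers. -/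
lemma sigma_mono {p : ℕ} (hp : p.Prime) {E e : ℕ} (h : E ≤ e) :
    σ 1 (p ^ E) * p ^ e ≤ p ^ E * σ 1 (p ^ e) := by
  have h1 := geom_id hp E
  have h2 := geom_id hp e
  have hc : 0 < p - 1 := by have := hp.two_le; omega
  refine Nat.le_of_mul_le_mul_left ?_ hc
  have hE1 : 1 ≤ p ^ (E+1) := Nat.one_le_pow _ _ hp.pos
  have he1 : 1 ≤ p ^ (e+1) := Nat.one_le_pow _ _ hp.pos
  have hEe : p ^ E ≤ p ^ e := Nat.pow_le_pow_right hp.pos h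
  calc (p-1) * (σ 1 (p^E) * p^e) = ((p-1) * σ 1 (p^E)) * p^e := by ring
    _ = (p^(E+1) - 1) * p^e := by rw [h1]
    _ = p^(E+1) * p^e - p^e := by rw [Nat.sub_mul, one_mul]
    _ ≤ p^E * p^(e+1) - p^E := by
        have l3 : p^(E+1) * p^e = p^E * p^(e+1) := by ring
        omega
    _ = p^E * (p^(e+1) - 1) := by rw [Nat.mul_sub, mul_one]
    _ = p^E * ((p-1) * σ 1 (p^e)) := by rw [h2]
    _ = (p-1) * (p^E * σ 1 (p^e)) := by ring

lemma even_exp_of_odd_sigma {p e : ℕ} (hp : p.Prime) (hodd : p ≠ 2)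
    (h : Odd (σ 1 (p ^ e))) : Even e := by
  have hpo : p % 2 = 1 := Nat.odd_iff.mp (hp.odd_of_ne_two hodd)
  rw [sigma_one_apply_prime_pow hp, Nat.odd_iff, Finset.sum_nat_mod] at h
  have hpow : ∀ k : ℕ, p ^ k % 2 = 1 := fun k => Nat.odd_iff.mp ((Nat.odd_iff.mpr hpo).pow)
  simp only [hpow] at h
  rw [Finset.sum_const, card_range, smul_eq_mul, mul_one] at h
  rcases Nat.even_or_odd e with he | he
  · exact he
  · exfalso; rw [Nat.odd_iff] at he; omega

lemma sigma_factorization {n : ℕ} (hn : n ≠ 0) :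
    σ 1 n = ∏ p ∈ n.primeFactors, σ 1 (p ^ n.factorization p) := by
  rw [isMultiplicative_sigma.multiplicative_factorization _ hn]
  rfl

lemma n_factorization {n : ℕ} (hn : n ≠ 0) :
    n = ∏ p ∈ n.primeFactors, p ^ n.factorization p := by
  conv_lhs => rw [← Nat.factorization_prod_pow_eq_self hn]
  rw [Finsupp.prod]
  rfl

/-- Lower bound combination lemma. -/
lemma prod_lower (n : ℕ) (hn : n ≠ 0) (c d : ℕ → ℕ)
    (h : ∀ p ∈ n.primeFactors, c p * p ^ n.factorization p ≤ d p * σ 1 (p ^ n.factorization p)) :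
    (∏ p ∈ n.primeFactors, c p) * n ≤ (∏ p ∈ n.primeFactors, d p) * σ 1 n := by
  calc (∏ p ∈ n.primeFactors, c p) * n
      = ∏ p ∈ n.primeFactors, (c p * p ^ n.factorization p) := by
        rw [Finset.prod_mul_distrib]; congr 1; exact n_factorization hn
    _ ≤ ∏ p ∈ n.primeFactors, (d p * σ 1 (p ^ n.factorization p)) := Finset.prod_le_prod' h
    _ = (∏ p ∈ n.primeFactors, d p) * σ 1 n := by
        rw [Finset.prod_mul_distrib]; congr 1; exact (sigma_factorization hn).symm

/-- Strict upper bound: `∏(p-1) * σ n < (∏ p) * n`. -/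
lemma prod_upper (n : ℕ) (hn : n ≠ 0) (hne : n.primeFactors.Nonempty) :
    (∏ p ∈ n.primeFactors, (p - 1)) * σ 1 n < (∏ p ∈ n.primeFactors, p) * n := by
  calc (∏ p ∈ n.primeFactors, (p - 1)) * σ 1 n
      = ∏ p ∈ n.primeFactors, ((p - 1) * σ 1 (p ^ n.factorization p)) := by
        rw [Finset.prod_mul_distrib]; congr 1; exact sigma_factorization hn
    _ < ∏ p ∈ n.primeFactors, (p * p ^ n.factorization p) := by
        refine Finset.prod_lt_prod_of_nonempty ?_ ?_ hne
        · intro p hp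
          have hpp := Nat.prime_of_mem_primeFactors hp
          rw [geom_id hpp]
          have : 2 ≤ p ^ (n.factorization p + 1) :=
            le_trans hpp.two_le (Nat.le_self_pow (by omega) p)
          omega
        · intro p hp
          have hpp := Nat.prime_of_mem_primeFactors hp
          rw [geom_id hpp]
          have h1 : 1 ≤ p ^ (n.factorization p + 1) := Nat.one_le_pow _ _ hpp.pos
          have heq : p * p ^ n.factorization p = p ^ (n.factorization p + 1) := by ring
          omega
    _ = (∏ p ∈ n.primeFactors, p) * n := by
        rw [Finset.prod_mul_distrib]; congr 1; exact (n_factorization hn).symm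
lemma prime_ge7 {q : ℕ} (h : q.Prime) (h2 : q ≠ 2) (h3 : q ≠ 3) (h5 : q ≠ 5) : 7 ≤ q := by
  by_contra hlt
  push_neg at hlt
  interval_cases q <;> first | exact absurd h (by decide) | omega

lemma prime_ge11 {q : ℕ} (h : q.Prime) (h7 : 7 ≤ q) (hne : q ≠ 7) : 11 ≤ q := by
  by_contra hlt
  push_neg at hlt
  interval_cases q <;> first | exact absurd h (by decide) | omega

lemma branchE {p e E C D : ℕ} (hp : p.Prime) (hs : σ 1 (p ^ E) = C) (hD : p ^ E = D)
    (h2 : E ≤ e) : C * p ^ e ≤ D * σ 1 (p ^ e) := by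
  rw [← hs, ← hD]; exact sigma_mono hp h2

lemma le_sigma {p e : ℕ} (hp : p.Prime) : p ^ e ≤ σ 1 (p ^ e) := by
  have h := sigma_mono hp (Nat.zero_le e)
  simpa [show σ 1 1 = 1 from by decide] using h

/-- Helper: product bound for finsets of numbers `≥ 11`. -/
lemma aux11 (S : Finset ℕ) (h : ∀ q ∈ S, 11 ≤ q) :
    10 ^ S.card * ∏ q ∈ S, q ≤ 11 ^ S.card * ∏ q ∈ S, (q - 1) := by
  rw [← Finset.prod_const, ← Finset.prod_mul_distrib, ← Finset.prod_const,
    ← Finset.prod_mul_distrib]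
  exact Finset.prod_le_prod' fun q hq => by have := h q hq; omega

theorem friend_of_ten_omega_ge_five (n : ℕ) (hn : IsFriend n 10) :
    5 ≤ n.primeFactors.card := by
  obtain ⟨hn0, -, hne, hab⟩ := hn
  have hnz : n ≠ 0 := hn0.ne'
  -- the fundamental equation
  have heq : 5 * σ 1 n = 9 * n := by
    have h10 : abundancy 10 = 9 / 5 := by
      rw [abundancy]; norm_num [show σ 1 10 = 18 from by decide]
    rw [h10, abundancy, div_eq_div_iff (by exact_mod_cast hnz) (by norm_num)] at hab
    have h' : (σ 1 n : ℚ) * 5 = 9 * n := by exact_mod_cast hab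
    have h'' : ((5 * σ 1 n : ℕ) : ℚ) = ((9 * n : ℕ) : ℚ) := by push_cast; linarith
    exact_mod_cast h''
  -- n is odd
  have hodd : ¬ (2 ∣ n) := by
    rintro ⟨m, hm⟩
    have h5n : 5 ∣ n := Nat.Coprime.dvd_of_dvd_mul_right
      (show Nat.Coprime 5 9 by decide) ⟨σ 1 n, by omega⟩
    obtain ⟨k, hk⟩ : 10 ∣ n := Nat.Coprime.mul_dvd_of_dvd_of_dvd (by decide) ⟨m, hm⟩ h5n
    have hk1 : k ≠ 0 := by rintro rfl; omega
    have hk2 : k ≠ 1 := by rintro rfl; exact hne (by omega)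
    have hsub : ({1, k, 2*k, 5*k, 10*k} : Finset ℕ) ⊆ n.divisors := by
      intro d hd
      simp only [Finset.mem_insert, Finset.mem_singleton] at hd
      rw [Nat.mem_divisors]
      rcases hd with rfl | rfl | rfl | rfl | rfl
      · exact ⟨one_dvd _, hnz⟩
      · exact ⟨⟨10, by omega⟩, hnz⟩
      · exact ⟨⟨5, by omega⟩, hnz⟩
      · exact ⟨⟨2, by omega⟩, hnz⟩
      · exact ⟨⟨1, by omega⟩, hnz⟩
    have hsum : ∑ d ∈ ({1, k, 2*k, 5*k, 10*k} : Finset ℕ), d = 18 * k + 1 := by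
      rw [Finset.sum_insert (by simp; omega), Finset.sum_insert (by simp; omega),
        Finset.sum_insert (by simp; omega), Finset.sum_insert (by simp; omega),
        Finset.sum_singleton]
      ring
    have hle : 18 * k + 1 ≤ σ 1 n := by
      rw [sigma_one_apply, ← hsum]
      exact Finset.sum_le_sum_of_subset hsub
    omega
  have hoddn : n % 2 = 1 := by omega
  have hσodd : Odd (σ 1 n) := by rw [Nat.odd_iff]; omega
  -- 5 is a prime factor
  have h5dvd : 5 ∣ n := Nat.Coprime.dvd_of_dvd_mul_right
    (show Nat.Coprime 5 9 by decide) ⟨σ 1 n, by omega⟩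
  have h5P : 5 ∈ n.primeFactors := Nat.mem_primeFactors.mpr ⟨by norm_num, h5dvd, hnz⟩
  -- all prime factors are odd
  have hne2 : ∀ p ∈ n.primeFactors, p ≠ 2 := by
    intro p hp hp2
    subst hp2
    exact hodd (Nat.dvd_of_mem_primeFactors hp)
  -- all exponents are at least 2 (and even)
  have hexp : ∀ p ∈ n.primeFactors, Even (n.factorization p) ∧ 2 ≤ n.factorization p := by
    intro p hp
    have hpp := Nat.prime_of_mem_primeFactors hp
    have hdvd : σ 1 (p ^ n.factorization p) ∣ σ 1 n := by
      rw [sigma_factorization hnz]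
      exact Finset.dvd_prod_of_mem _ hp
    have hodds : Odd (σ 1 (p ^ n.factorization p)) := by
      obtain ⟨c, hc⟩ := hdvd
      rw [hc, Nat.odd_mul] at hσodd
      exact hσodd.1
    have hev : Even (n.factorization p) := even_exp_of_odd_sigma hpp (hne2 p hp) hodds
    have hpos : 0 < n.factorization p :=
      Nat.Prime.factorization_pos_of_dvd hpp hnz (Nat.dvd_of_mem_primeFactors hp)
    refine ⟨hev, ?_⟩
    rw [Nat.even_iff] at hev
    omega
  -- 3 is not a prime factor
  have h3 : 3 ∉ n.primeFactors := by
    intro h3P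
    by_cases h4 : 4 ≤ n.factorization 3
    · -- abundancy already too big: σ₋₁(3^e)σ₋₁(5^f) ≥ (121/81)(31/25) > 9/5
      set c : ℕ → ℕ := fun p => if p = 3 then 121 else if p = 5 then 31 else 1 with hc
      set d : ℕ → ℕ := fun p => if p = 3 then 81 else if p = 5 then 25 else 1 with hd
      have key := prod_lower n hnz c d ?_
      · have hPc : ∏ p ∈ n.primeFactors, c p = 3751 := by
          rw [← Finset.prod_subset (Finset.insert_subset h3P (Finset.singleton_subset_iff.mpr h5P))
            (fun x _ hx => by
              simp only [Finset.mem_insert, Finset.mem_singleton, not_or] at hx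
              simp [hc, hx.1, hx.2])]
          simp [hc]
        have hPd : ∏ p ∈ n.primeFactors, d p = 2025 := by
          rw [← Finset.prod_subset (Finset.insert_subset h3P (Finset.singleton_subset_iff.mpr h5P))
            (fun x _ hx => by
              simp only [Finset.mem_insert, Finset.mem_singleton, not_or] at hx
              simp [hd, hx.1, hx.2])]
          simp [hd]
        rw [hPc, hPd] at key
        -- 3751 * n ≤ 2025 * σ n, 5 σ n = 9 n : contradiction
        omega
      · intro p hp
        have hpp := Nat.prime_of_mem_primeFactors hp
        by_cases hp3 : p = 3
        · subst hp3
          show 121 * 3 ^ n.factorization 3 ≤ 81 * σ 1 (3 ^ n.factorization 3)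
          exact branchE hpp (by decide) (by norm_num) h4
        · by_cases hp5 : p = 5
          · subst hp5
            show 31 * 5 ^ n.factorization 5 ≤ 25 * σ 1 (5 ^ n.factorization 5)
            exact branchE hpp (by decide) (by norm_num) (hexp 5 hp).2
          · simp only [hc, hd, if_neg hp3, if_neg hp5, one_mul]
            exact le_sigma hpp
    · -- factorization 3 = 2, hence 13 ∣ σ n, hence 13 ∣ n
      have he3 : n.factorization 3 = 2 := by
        obtain ⟨hev, h2⟩ := hexp 3 h3P
        rw [Nat.even_iff] at hev
        omega
      have h13dvdσ : 13 ∣ σ 1 n := by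
        have : σ 1 (3 ^ n.factorization 3) ∣ σ 1 n := by
          rw [sigma_factorization hnz]
          exact Finset.dvd_prod_of_mem _ h3P
        rwa [he3, show σ 1 (3^2) = 13 from by decide] at this
      have h13dvd : 13 ∣ n := by
        obtain ⟨c, hcc⟩ := h13dvdσ
        exact Nat.Coprime.dvd_of_dvd_mul_right (show Nat.Coprime 13 9 by decide)
          ⟨5 * c, by omega⟩
      have h13P : 13 ∈ n.primeFactors := Nat.mem_primeFactors.mpr ⟨by norm_num, h13dvd, hnz⟩
      set c : ℕ → ℕ := fun p => if p = 3 then 13 else if p = 5 then 31 else if p = 13 then 183 else 1 with hc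
      set d : ℕ → ℕ := fun p => if p = 3 then 9 else if p = 5 then 25 else if p = 13 then 169 else 1 with hd
      have key := prod_lower n hnz c d ?_
      · have hsub : ({3, 5, 13} : Finset ℕ) ⊆ n.primeFactors := by
          intro x hx
          simp only [Finset.mem_insert, Finset.mem_singleton] at hx
          rcases hx with rfl | rfl | rfl <;> assumption
        have hPc : ∏ p ∈ n.primeFactors, c p = 73749 := by
          rw [← Finset.prod_subset hsub (fun x _ hx => by
              simp only [Finset.mem_insert, Finset.mem_singleton, not_or] at hx
              simp [hc, hx.1, hx.2.1, hx.2.2])]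
          simp [hc]
        have hPd : ∏ p ∈ n.primeFactors, d p = 38025 := by
          rw [← Finset.prod_subset hsub (fun x _ hx => by
              simp only [Finset.mem_insert, Finset.mem_singleton, not_or] at hx
              simp [hd, hx.1, hx.2.1, hx.2.2])]
          simp [hd]
        rw [hPc, hPd] at key
        omega
      · intro p hp
        have hpp := Nat.prime_of_mem_primeFactors hp
        have h2 := (hexp p hp).2
        by_cases hp3 : p = 3
        · subst hp3
          show 13 * 3 ^ n.factorization 3 ≤ 9 * σ 1 (3 ^ n.factorization 3)
          exact branchE hpp (by decide) (by norm_num) h2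
        · by_cases hp5 : p = 5
          · subst hp5
            show 31 * 5 ^ n.factorization 5 ≤ 25 * σ 1 (5 ^ n.factorization 5)
            exact branchE hpp (by decide) (by norm_num) h2
          · by_cases hp13 : p = 13
            · subst hp13
              show 183 * 13 ^ n.factorization 13 ≤ 169 * σ 1 (13 ^ n.factorization 13)
              exact branchE hpp (by decide) (by norm_num) h2
            · simp only [hc, hd, if_neg hp3, if_neg hp5, if_neg hp13, one_mul]
              exact le_sigma hpp
  -- main counting argument
  by_contra hcard
  push_neg at hcard
  have hcard4 : n.primeFactors.card ≤ 4 := by omega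
  -- strict upper bound
  have hupper := prod_upper n hnz ⟨5, h5P⟩
  -- so 9 * ∏ (p-1) < 5 * ∏ p
  have hkey : 9 * ∏ p ∈ n.primeFactors, (p - 1) < 5 * ∏ p ∈ n.primeFactors, p := by
    have h1 : n * (9 * ∏ p ∈ n.primeFactors, (p - 1)) < n * (5 * ∏ p ∈ n.primeFactors, p) := by
      calc n * (9 * ∏ p ∈ n.primeFactors, (p - 1))
          = (∏ p ∈ n.primeFactors, (p - 1)) * (9 * n) := by ring
        _ = (∏ p ∈ n.primeFactors, (p - 1)) * (5 * σ 1 n) := by rw [heq]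
        _ = 5 * ((∏ p ∈ n.primeFactors, (p - 1)) * σ 1 n) := by ring
        _ < 5 * ((∏ p ∈ n.primeFactors, p) * n) := by
            exact (Nat.mul_lt_mul_left (show 0 < 5 by norm_num)).mpr hupper
        _ = n * (5 * ∏ p ∈ n.primeFactors, p) := by ring
    exact Nat.lt_of_mul_lt_mul_left h1
  -- now show the opposite inequality
  set Q := n.primeFactors.erase 5 with hQ
  have hprodP : ∏ p ∈ n.primeFactors, p = 5 * ∏ q ∈ Q, q :=
    (Finset.mul_prod_erase _ _ h5P).symm
  have hprodP' : ∏ p ∈ n.primeFactors, (p - 1) = 4 * ∏ q ∈ Q, (q - 1) :=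
    (Finset.mul_prod_erase _ (fun p => p - 1) h5P).symm
  rw [hprodP, hprodP'] at hkey
  have hQcard : Q.card ≤ 3 := by
    rw [hQ, Finset.card_erase_of_mem h5P]
    omega
  have hQ7 : ∀ q ∈ Q, Nat.Prime q ∧ 7 ≤ q := by
    intro q hq
    have hqP := Finset.mem_of_mem_erase hq
    have hqp := Nat.prime_of_mem_primeFactors hqP
    refine ⟨hqp, ?_⟩
    exact prime_ge7 hqp (hne2 q hqP) (by rintro rfl; exact h3 hqP)
      (Finset.ne_of_mem_erase hq)
  -- contradiction : 25 * ∏ q ≤ 36 * ∏ (q-1)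
  have hcontra : 25 * ∏ q ∈ Q, q ≤ 36 * ∏ q ∈ Q, (q - 1) := by
    by_cases h7 : 7 ∈ Q
    · set Q' := Q.erase 7 with hQ'
      have hq'11 : ∀ q ∈ Q', 11 ≤ q := by
        intro q hq
        have hqQ := Finset.mem_of_mem_erase hq
        obtain ⟨hqp, hq7⟩ := hQ7 q hqQ
        exact prime_ge11 hqp hq7 (Finset.ne_of_mem_erase hq)
      have haux := aux11 Q' hq'11
      have hc' : Q'.card ≤ 2 := by
        rw [hQ', Finset.card_erase_of_mem h7]; omega
      have hq : ∏ q ∈ Q, q = 7 * ∏ q ∈ Q', q := (Finset.mul_prod_erase _ _ h7).symm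
      have hq' : ∏ q ∈ Q, (q - 1) = 6 * ∏ q ∈ Q', (q - 1) :=
        (Finset.mul_prod_erase _ (fun q => q - 1) h7).symm
      rw [hq, hq']
      have hnum : 175 * 11 ^ Q'.card ≤ 216 * 10 ^ Q'.card := by
        interval_cases h : Q'.card <;> norm_num
      calc 25 * (7 * ∏ q ∈ Q', q) = 175 * ∏ q ∈ Q', q := by ring
        _ ≤ 216 * ∏ q ∈ Q', (q - 1) := by
            refine Nat.le_of_mul_le_mul_left ?_ (show 0 < 10 ^ Q'.card by positivity)
            calc 10 ^ Q'.card * (175 * ∏ q ∈ Q', q)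
                = 175 * (10 ^ Q'.card * ∏ q ∈ Q', q) := by ring
              _ ≤ 175 * (11 ^ Q'.card * ∏ q ∈ Q', (q - 1)) := Nat.mul_le_mul_left _ haux
              _ = (175 * 11 ^ Q'.card) * ∏ q ∈ Q', (q - 1) := by ring
              _ ≤ (216 * 10 ^ Q'.card) * ∏ q ∈ Q', (q - 1) := Nat.mul_le_mul_right _ hnum
              _ = 10 ^ Q'.card * (216 * ∏ q ∈ Q', (q - 1)) := by ring
        _ = 36 * (6 * ∏ q ∈ Q', (q - 1)) := by ring
    · have hq11 : ∀ q ∈ Q, 11 ≤ q := by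
        intro q hq
        obtain ⟨hqp, hq7⟩ := hQ7 q hq
        exact prime_ge11 hqp hq7 (by rintro rfl; exact h7 hq)
      have haux := aux11 Q hq11
      have hnum : 25 * 11 ^ Q.card ≤ 36 * 10 ^ Q.card := by
        interval_cases h : Q.card <;> norm_num
      refine Nat.le_of_mul_le_mul_left ?_ (show 0 < 10 ^ Q.card by positivity)
      calc 10 ^ Q.card * (25 * ∏ q ∈ Q, q)
          = 25 * (10 ^ Q.card * ∏ q ∈ Q, q) := by ring
        _ ≤ 25 * (11 ^ Q.card * ∏ q ∈ Q, (q - 1)) := Nat.mul_le_mul_left _ haux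
        _ = (25 * 11 ^ Q.card) * ∏ q ∈ Q, (q - 1) := by ring
        _ ≤ (36 * 10 ^ Q.card) * ∏ q ∈ Q, (q - 1) := Nat.mul_le_mul_right _ hnum
        _ = 10 ^ Q.card * (36 * ∏ q ∈ Q, (q - 1)) := by ring
  omega
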